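/- Let V be a finite set of n nodes, let 1 ≤ k < n, let p : V → [0,1], and let ε, δ ∈ (0,1). On a probability space, let X_1, …, X_t be independent, identically distributed measurable maps from Ω to [0,1]^V with E[X_i(v)] = p(v) for every node v and every i, and define the estimator p̂(v) = (1/t)·Σ_{i=1}^t X_i(v). If t ≥ (2/ε²)·ln(k·(n−k)/δ), then with probability at least 1 − δ the following holds: every subset R ⊆ V with |R| = k satisfying p̂(u) ≥ p̂(w) for all u ∈ R and w ∈ V \ R satisfies (1) p(v) ≥ P^k − ε for all v ∈ R, and (2) p(v) < P^k + ε for all v ∈ V \ R, where P^k is the k-th largest value of p over V. -/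

import Mathlib

open MeasureTheory ProbabilityTheory
open Real Set

/-- The `k`-th largest value attained by `f` on the finite type `V`
(the `k`-th entry, 1-indexed, of the list of values of `f` sorted in
non-increasing order). -/
noncomputable def kthLargest {V : Type*} [Fintype V] (f : V → ℝ) (k : ℕ) : ℝ :=
  ((Finset.univ.val.map f).sort (· ≥ ·)).getD (k - 1) 0

lemma hoeffding_aux {q h : ℝ} (hq0 : 0 ≤ q) (hq1 : q ≤ 1) (hh : 0 ≤ h) :
    Real.exp (-(q*h)) * (1 - q + q * Real.exp h) ≤ Real.exp (h^2/8) := by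
  set D : ℝ → ℝ := fun x => 1 - q + q * Real.exp x with hDdef
  have hD : ∀ x, 0 < D x := by
    intro x
    have he := exp_pos x
    simp only [hDdef]
    rcases eq_or_lt_of_le hq0 with h2 | h2
    · rw [← h2]; norm_num
    · nlinarith
  set φ : ℝ → ℝ := fun x => x^2/8 + q*x - Real.log (D x) with hφdef
  set φ1 : ℝ → ℝ := fun x => x/4 + q - q * Real.exp x / D x with hφ1def
  set φ2 : ℝ → ℝ := fun x => 1/4 - q * (1-q) * Real.exp x / (D x)^2 with hφ2def
  have hDer : ∀ x, HasDerivAt D (q * Real.exp x) x := fun x =>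
    ((Real.hasDerivAt_exp x).const_mul q).const_add (1 - q)
  have hφ1 : ∀ x, HasDerivAt φ (φ1 x) x := by
    intro x
    have h1 : HasDerivAt (fun x : ℝ => x^2/8 + q*x) (x/4 + q) x := by
      have := ((hasDerivAt_pow 2 x).div_const 8).add ((hasDerivAt_id x).const_mul q)
      exact this.congr_deriv (by norm_num; ring)
    have h2 : HasDerivAt (fun x => Real.log (D x)) (q * Real.exp x / D x) x :=
      (hDer x).log (hD x).ne'
    exact h1.sub h2
  have hφ2 : ∀ x, HasDerivAt φ1 (φ2 x) x := by
    intro x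
    have h1 : HasDerivAt (fun x : ℝ => x/4 + q) (1/4) x := by
      simpa using ((hasDerivAt_id x).div_const 4).add_const q
    have h2 : HasDerivAt (fun x => q * Real.exp x / D x)
        ((q * Real.exp x * D x - q * Real.exp x * (q * Real.exp x)) / (D x)^2) x :=
      ((Real.hasDerivAt_exp x).const_mul q).div (hDer x) (hD x).ne'
    have h3 : (q * Real.exp x * D x - q * Real.exp x * (q * Real.exp x)) / (D x)^2
        = q * (1-q) * Real.exp x / (D x)^2 := by
      congr 1; simp only [hDdef]; ring
    rw [h3] at h2
    exact h1.sub h2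
  have hφ2nonneg : ∀ x, 0 ≤ φ2 x := by
    intro x
    have hDx := hD x
    have he := exp_pos x
    simp only [hφ2def, hDdef] at hDx ⊢
    rw [sub_nonneg, div_le_iff₀ (by positivity)]
    nlinarith [sq_nonneg ((1 - q) - q * Real.exp x)]
  have hφ1mono : MonotoneOn φ1 (Ici (0:ℝ)) := by
    apply monotoneOn_of_deriv_nonneg (convex_Ici 0)
      (fun x _ => (hφ2 x).continuousAt.continuousWithinAt)
      (fun x _ => ((hφ2 x).differentiableAt).differentiableWithinAt)
    intro x _
    rw [(hφ2 x).deriv]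
    exact hφ2nonneg x
  have hφ1zero : φ1 0 = 0 := by
    simp only [hφ1def, hDdef]
    simp
  have hφ1nonneg : ∀ x ∈ Ici (0:ℝ), 0 ≤ φ1 x := by
    intro x hx
    rw [← hφ1zero]
    exact hφ1mono (by simp) hx hx
  have hφmono : MonotoneOn φ (Ici (0:ℝ)) := by
    apply monotoneOn_of_deriv_nonneg (convex_Ici 0)
      (fun x _ => (hφ1 x).continuousAt.continuousWithinAt)
      (fun x _ => ((hφ1 x).differentiableAt).differentiableWithinAt)
    intro x hx
    rw [(hφ1 x).deriv]
    exact hφ1nonneg x (interior_subset hx)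
  have hφzero : φ 0 = 0 := by simp [hφdef, hDdef]
  have hφh : 0 ≤ φ h := by
    rw [← hφzero]
    exact hφmono (by simp) hh hh
  have hlog : Real.log (D h) ≤ h^2/8 + q*h := by
    simp only [hφdef] at hφh; linarith
  have hDh : D h ≤ Real.exp (h^2/8 + q*h) := by
    rw [← Real.exp_log (hD h)]
    exact Real.exp_le_exp.2 hlog
  calc Real.exp (-(q*h)) * (1 - q + q * Real.exp h) = Real.exp (-(q*h)) * D h := rfl
    _ ≤ Real.exp (-(q*h)) * Real.exp (h^2/8 + q*h) := by
        exact mul_le_mul_of_nonneg_left hDh (exp_pos _).le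
    _ = Real.exp (h^2/8) := by rw [← Real.exp_add]; ring_nf

lemma mgf_le_of_bounded {Ω : Type*} [MeasurableSpace Ω] {μ : Measure Ω}
    [IsProbabilityMeasure μ] {Z : Ω → ℝ} (hZ : Measurable Z) {a : ℝ}
    (hb : ∀ᵐ ω ∂μ, Z ω ∈ Set.Icc a (a+2)) (hmean : ∫ ω, Z ω ∂μ = 0)
    {s : ℝ} (hs : 0 ≤ s) : mgf Z μ s ≤ Real.exp (s^2/2) := by
  have hintZ : Integrable Z μ := by
    refine Integrable.mono' (integrable_const (|a| + 2)) hZ.aestronglyMeasurable ?_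
    filter_upwards [hb] with ω hω
    rw [Real.norm_eq_abs, abs_le]
    constructor
    · have := hω.1; have := neg_abs_le a; linarith
    · have := hω.2; have := le_abs_self a; linarith
  have ha0 : a ≤ 0 := by
    rw [← hmean]
    have : ∫ _ : Ω, a ∂μ = a := by simp
    rw [← this]
    exact integral_mono_ae (integrable_const a) hintZ (hb.mono fun ω hω => hω.1)
  have hb0 : 0 ≤ a + 2 := by
    have h := integral_mono_ae hintZ (integrable_const (a+2)) (hb.mono fun ω hω => hω.2)
    rw [hmean] at h; simpa using h
  -- pointwise convexity bound
  have hpt : ∀ᵐ ω ∂μ, Real.exp (s * Z ω) ≤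
      ((a + 2 - Z ω)/2) * Real.exp (s*a) + ((Z ω - a)/2) * Real.exp (s*(a+2)) := by
    filter_upwards [hb] with ω hω
    have hθ : 0 ≤ (a + 2 - Z ω)/2 := by have := hω.2; linarith
    have hτ : 0 ≤ (Z ω - a)/2 := by have := hω.1; linarith
    have hsum : (a + 2 - Z ω)/2 + (Z ω - a)/2 = 1 := by ring
    have := convexOn_exp.2 (Set.mem_univ (s*a)) (Set.mem_univ (s*(a+2))) hθ hτ hsum
    simp only [smul_eq_mul] at this
    refine (congrArg Real.exp ?_).trans_le this
    ring
  have hintexp : Integrable (fun ω => Real.exp (s * Z ω)) μ := by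
    refine Integrable.mono' (integrable_const (Real.exp (|s| * (|a| + 2))))
      ((hZ.const_mul s).exp.aestronglyMeasurable) ?_
    filter_upwards [hb] with ω hω
    rw [Real.norm_eq_abs, abs_of_pos (exp_pos _), Real.exp_le_exp]
    have h1 : |Z ω| ≤ |a| + 2 := by
      rw [abs_le]
      constructor
      · have := hω.1; have := neg_abs_le a; linarith
      · have := hω.2; have := le_abs_self a; linarith
    calc s * Z ω ≤ |s * Z ω| := le_abs_self _
      _ = |s| * |Z ω| := abs_mul s _
      _ ≤ |s| * (|a| + 2) := by
          exact mul_le_mul_of_nonneg_left h1 (abs_nonneg s)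
  have hintRHS : Integrable (fun ω =>
      ((a + 2 - Z ω)/2) * Real.exp (s*a) + ((Z ω - a)/2) * Real.exp (s*(a+2))) μ := by
    apply Integrable.add
    · exact (((integrable_const (a+2)).sub hintZ).div_const 2).mul_const _
    · exact (((hintZ.sub (integrable_const a)).div_const 2)).mul_const _
  have hform : ∀ ω : Ω, (a + 2 - Z ω)/2 * Real.exp (s*a) + (Z ω - a)/2 * Real.exp (s*(a+2))
      = (Real.exp (s*(a+2)) - Real.exp (s*a))/2 * Z ω
        + ((a+2)*Real.exp (s*a) - a * Real.exp (s*(a+2)))/2 := fun ω => by ring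
  have hint : mgf Z μ s ≤ ((a+2)/2) * Real.exp (s*a) + (-a/2) * Real.exp (s*(a+2)) := by
    have h1 := integral_mono_ae hintexp hintRHS hpt
    simp_rw [hform] at h1
    rw [mgf]
    refine h1.trans_eq ?_
    rw [integral_add (hintZ.const_mul _) (integrable_const _), MeasureTheory.integral_const_mul, hmean]
    simp only [mul_zero, zero_add, integral_const, measure_univ, probReal_univ, ENNReal.toReal_one, smul_eq_mul,
      one_mul]
    ring
  set q : ℝ := -a/2 with hqdef
  have hq0 : 0 ≤ q := by simp only [hqdef]; linarith
  have hq1 : q ≤ 1 := by simp only [hqdef]; linarith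
  have key := hoeffding_aux hq0 hq1 (by linarith : (0:ℝ) ≤ 2*s)
  have heq : ((a+2)/2) * Real.exp (s*a) + (-a/2) * Real.exp (s*(a+2))
      = Real.exp (-(q*(2*s))) * (1 - q + q * Real.exp (2*s)) := by
    have e1 : s * a = -(q*(2*s)) := by simp only [hqdef]; ring
    have e2 : s * (a+2) = -(q*(2*s)) + 2*s := by simp only [hqdef]; ring
    rw [e1, e2, Real.exp_add]
    simp only [hqdef]
    ring
  have : ((a+2)/2) * Real.exp (s*a) + (-a/2) * Real.exp (s*(a+2)) ≤ Real.exp ((2*s)^2/8) := by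
    rw [heq]; exact key
  refine (hint.trans this).trans_eq ?_
  congr 1
  ring

lemma chernoff_sum {Ω : Type*} [MeasurableSpace Ω] {P : Measure Ω}
    [IsProbabilityMeasure P] {t : ℕ} {Y : Fin t → Ω → ℝ}
    (hmeas : ∀ i, Measurable (Y i))
    (hind : iIndepFun Y P)
    (hrange : ∀ i, ∀ᵐ ω ∂P, Y i ω ∈ Set.Icc (-1 : ℝ) 1)
    {μ : ℝ} (hμ : 0 < μ) (hmean : ∀ i, ∫ ω, Y i ω ∂P = μ) :
    (P {ω | ∑ i, Y i ω ≤ 0}).toReal ≤ Real.exp (-((t : ℝ) * μ^2/2)) := by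
  classical
  set Z : Fin t → Ω → ℝ := fun i ω => μ - Y i ω with hZdef
  have hZmeas : ∀ i, Measurable (Z i) := fun i => (measurable_const.sub (hmeas i))
  have hZind : iIndepFun Z P := by
    have := hind.comp (fun _ (x : ℝ) => μ - x) (fun _ => measurable_const.sub measurable_id)
    exact this
  have hintY : ∀ i, Integrable (Y i) P := by
    intro i
    refine Integrable.mono' (integrable_const 1) (hmeas i).aestronglyMeasurable ?_
    filter_upwards [hrange i] with ω hω
    rw [Real.norm_eq_abs, abs_le]; exact ⟨hω.1, hω.2⟩
  have hZmean : ∀ i, ∫ ω, Z i ω ∂P = 0 := by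
    intro i
    simp only [hZdef]
    rw [integral_sub (integrable_const μ) (hintY i), hmean i]
    simp
  have hZrange : ∀ i, ∀ᵐ ω ∂P, Z i ω ∈ Set.Icc (μ - 1) ((μ-1) + 2) := by
    intro i
    filter_upwards [hrange i] with ω hω
    constructor
    · simp only [hZdef]; have := hω.2; simp; linarith
    · simp only [hZdef]; have := hω.1; linarith
  -- the sum as a function
  set S : Ω → ℝ := ∑ i : Fin t, Z i with hSdef
  have hSmeas : Measurable S := by
    simp only [hSdef]
    have := Finset.measurable_sum Finset.univ (fun i (_ : i ∈ Finset.univ) => hZmeas i)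
    convert this using 1
    ext ω; simp [Finset.sum_apply]
  have hSbound : ∀ᵐ ω ∂P, |S ω| ≤ (t : ℝ) * (μ + 1) := by
    have : ∀ᵐ ω ∂P, ∀ i, Y i ω ∈ Set.Icc (-1:ℝ) 1 := ae_all_iff.2 hrange
    filter_upwards [this] with ω hω
    have : S ω = ∑ i : Fin t, (μ - Y i ω) := by
      simp only [hSdef, Finset.sum_apply, hZdef]
    rw [this]
    calc |∑ i : Fin t, (μ - Y i ω)| ≤ ∑ i : Fin t, |μ - Y i ω| :=
          Finset.abs_sum_le_sum_abs _ _
      _ ≤ ∑ _i : Fin t, (μ + 1) := by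
          apply Finset.sum_le_sum
          intro i _
          have h1 := (hω i).1; have h2 := (hω i).2
          rw [abs_le]; constructor <;> linarith
      _ = (t : ℝ) * (μ + 1) := by simp; ring
  have hintexp : Integrable (fun ω => Real.exp (μ * S ω)) P := by
    refine Integrable.mono' (integrable_const (Real.exp (μ * ((t:ℝ)*(μ+1)))))
      ((hSmeas.const_mul μ).exp.aestronglyMeasurable) ?_
    filter_upwards [hSbound] with ω hω
    rw [Real.norm_eq_abs, abs_of_pos (exp_pos _), Real.exp_le_exp]
    calc μ * S ω ≤ μ * |S ω| := by
          exact mul_le_mul_of_nonneg_left (le_abs_self _) hμ.le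
      _ ≤ μ * ((t:ℝ)*(μ+1)) := mul_le_mul_of_nonneg_left hω hμ.le
  have hset : {ω | ∑ i, Y i ω ≤ 0} = {ω | (t : ℝ) * μ ≤ S ω} := by
    ext ω
    simp only [Set.mem_setOf_eq, hSdef, Finset.sum_apply, hZdef, Finset.sum_sub_distrib,
      Finset.sum_const, Finset.card_univ, Fintype.card_fin, nsmul_eq_mul]
    constructor <;> intro h <;> linarith
  have hcher := measure_ge_le_exp_mul_mgf (μ := P) (X := S) ((t:ℝ)*μ) hμ.le hintexp
  rw [hset]
  refine hcher.trans ?_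
  have hmgf : mgf S P μ = ∏ i : Fin t, mgf (Z i) P μ := hZind.mgf_sum hZmeas Finset.univ
  have hprod : ∏ i : Fin t, mgf (Z i) P μ ≤ Real.exp (μ^2/2) ^ t := by
    rw [show Real.exp (μ^2/2) ^ t = ∏ _i : Fin t, Real.exp (μ^2/2) by
      rw [Finset.prod_const, Finset.card_univ, Fintype.card_fin]]
    apply Finset.prod_le_prod
    · intro i _; exact mgf_nonneg
    · intro i _
      exact mgf_le_of_bounded (hZmeas i) (hZrange i) (hZmean i) hμ.le
  calc Real.exp (-μ * ((t:ℝ)*μ)) * mgf S P μ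
      ≤ Real.exp (-μ * ((t:ℝ)*μ)) * Real.exp (μ^2/2) ^ t := by
        rw [hmgf]
        exact mul_le_mul_of_nonneg_left hprod (exp_pos _).le
    _ = Real.exp (-((t : ℝ) * μ^2/2)) := by
        rw [← Real.exp_nat_mul, ← Real.exp_add]
        congr 1
        ring

lemma exists_top_finset {V : Type*} [Fintype V] [DecidableEq V] (p : V → ℝ) (k : ℕ)
    (hk : 1 ≤ k) (hkn : k ≤ Fintype.card V) :
    ∃ T : Finset V, T.card = k ∧ (∀ u ∈ T, kthLargest p k ≤ p u) ∧
      (∀ w ∉ T, p w ≤ kthLargest p k) := by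
  classical
  set r : V → V → Prop := fun a b => p b ≤ p a with hrdef
  haveI : IsTotal V r := ⟨fun a b => le_total (p b) (p a)⟩
  haveI : IsTrans V r := ⟨fun a b c h1 h2 => le_trans h2 h1⟩
  haveI : DecidableRel r := fun a b => inferInstanceAs (Decidable (p b ≤ p a))
  set l : List V := List.insertionSort r Finset.univ.toList with hldef
  have hperm : List.Perm l Finset.univ.toList := List.perm_insertionSort r _
  have hnodup : l.Nodup := hperm.nodup_iff.2 (Finset.nodup_toList _)
  have hlen : l.length = Fintype.card V := by
    rw [hperm.length_eq, Finset.length_toList, Finset.card_univ]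
  have hsorted : l.Pairwise r := List.pairwise_insertionSort r _
  have hk1 : k - 1 < l.length := by omega
  -- the sorted list of values equals l.map p
  have hmapeq : ((Finset.univ.val.map p).sort (· ≥ ·)) = l.map p := by
    refine (fun h1 h2 h3 => List.Perm.eq_of_pairwise' (r := (· ≥ ·)) h2 h3 h1) ?_ ?_ ?_
    · rw [← Multiset.coe_eq_coe, Multiset.sort_eq, ← Multiset.map_coe,
        Multiset.coe_eq_coe.2 hperm, Finset.coe_toList]
    · exact Multiset.pairwise_sort _ _
    · exact List.Pairwise.map p (fun a b h => h) hsorted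
  have hP : kthLargest p k = p (l[k-1]'hk1) := by
    rw [kthLargest, hmapeq, List.getD_eq_getElem _ _ (by simp [hk1]), List.getElem_map]
  set T : Finset V := (l.take k).toFinset with hTdef
  have hTcard : T.card = k := by
    rw [hTdef, List.toFinset_card_of_nodup (hnodup.sublist (List.take_sublist _ _))]
    rw [List.length_take, hlen]
    omega
  refine ⟨T, hTcard, ?_, ?_⟩
  · intro u hu
    rw [hTdef, List.mem_toFinset] at hu
    obtain ⟨i, hi, hieq⟩ := List.getElem_of_mem hu
    rw [List.length_take] at hi
    have hik : i < k := lt_of_lt_of_le hi (min_le_left _ _)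
    have hil : i < l.length := by omega
    rw [List.getElem_take] at hieq
    rw [hP, ← hieq]
    rcases lt_or_eq_of_le (by omega : i ≤ k - 1) with h | h
    · exact (List.pairwise_iff_getElem.1 hsorted i (k-1) hil hk1 h)
    · subst h; exact le_refl _
  · intro w hw
    rw [hTdef, List.mem_toFinset] at hw
    have hwl : w ∈ l := hperm.mem_iff.2 (by simp [Finset.mem_toList])
    obtain ⟨j, hj, hjeq⟩ := List.getElem_of_mem hwl
    have hjk : k ≤ j := by
      by_contra h
      push_neg at h
      apply hw
      have : l[j] ∈ l.take k := by
        rw [show l[j] = (l.take k)[j]'(by simp; omega) by simp]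
        exact List.getElem_mem _
      rw [hjeq] at this
      exact this
    rw [hP, ← hjeq]
    exact (List.pairwise_iff_getElem.1 hsorted (k-1) j hk1 hj (by omega))

/-- Theorem 4 of the paper: the basic sampling algorithm, which estimates each
node's default probability `p v` by the average `p̂ v` of `t` i.i.d. samples
in `[0,1]` and returns the `k` nodes with the largest estimates, is an
`(ε, δ)`-approximation when `t ≥ (2/ε²)·ln(k(n-k)/δ)`. -/
theorem stmt2
    {V : Type*} [Fintype V] [DecidableEq V]
    {Ω : Type*} [MeasureSpace Ω] [IsProbabilityMeasure (ℙ : Measure Ω)]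
    (n k : ℕ) (hn : Fintype.card V = n) (hk : 1 ≤ k) (hkn : k < n)
    (p : V → ℝ) (hp : ∀ v, p v ∈ Set.Icc (0 : ℝ) 1)
    (ε δ : ℝ) (hε : ε ∈ Set.Ioo (0 : ℝ) 1) (hδ : δ ∈ Set.Ioo (0 : ℝ) 1)
    (t : ℕ) (X : Fin t → Ω → V → ℝ)
    (hmeas : ∀ i, Measurable (X i))
    (hindep : iIndepFun X ℙ)
    (hident : ∀ i j, IdentDistrib (X i) (X j) ℙ ℙ)
    (hrange : ∀ i, ∀ᵐ ω ∂ℙ, ∀ v, X i ω v ∈ Set.Icc (0 : ℝ) 1)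
    (hmean : ∀ i v, ∫ ω, X i ω v ∂ℙ = p v)
    (ht : (2 / ε ^ 2) * Real.log ((k : ℝ) * ((n : ℝ) - (k : ℝ)) / δ) ≤ (t : ℝ)) :
    1 - δ ≤ (ℙ {ω | ∀ R : Finset V, R.card = k →
        (∀ u ∈ R, ∀ w ∉ R,
          (∑ i, X i ω w) / (t : ℝ) ≤ (∑ i, X i ω u) / (t : ℝ)) →
        (∀ v ∈ R, kthLargest p k - ε ≤ p v) ∧
        (∀ v ∉ R, p v < kthLargest p k + ε)}).toReal := by
  classical
  obtain ⟨hε0, hε1⟩ := hε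
  obtain ⟨hδ0, hδ1⟩ := hδ
  set P := kthLargest p k with hPdef
  set C : ℝ := (k : ℝ) * ((n : ℝ) - (k : ℝ)) with hCdef
  have hkn' : k ≤ Fintype.card V := by omega
  have hkR : (1:ℝ) ≤ (k:ℝ) := by exact_mod_cast hk
  have hknR : (k:ℝ) + 1 ≤ (n:ℝ) := by exact_mod_cast hkn
  have hC1 : (1:ℝ) ≤ C := by rw [hCdef]; nlinarith
  have hC0 : (0:ℝ) < C := lt_of_lt_of_le one_pos hC1
  have hlogpos : 0 < Real.log (C / δ) :=
    Real.log_pos ((one_lt_div hδ0).2 (lt_of_lt_of_le hδ1 hC1))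
  have ht0 : (0:ℝ) < (t:ℝ) :=
    lt_of_lt_of_le (mul_pos (by positivity) hlogpos) ht
  -- the key numeric inequality
  have hlogle : Real.log (C / δ) ≤ (t:ℝ) * ε^2 / 2 := by
    have h1 : (2 / ε^2) * Real.log (C / δ) * (ε^2/2) ≤ (t:ℝ) * (ε^2/2) :=
      mul_le_mul_of_nonneg_right ht (by positivity)
    have h2 : (2 / ε^2) * Real.log (C / δ) * (ε^2/2) = Real.log (C / δ) := by
      field_simp
    rw [h2] at h1
    linarith
  have hexp : Real.exp (-((t:ℝ) * ε^2 / 2)) ≤ δ / C := by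
    rw [show δ / C = Real.exp (Real.log (δ / C)) from (Real.exp_log (by positivity)).symm]
    apply Real.exp_le_exp.2
    rw [Real.log_div hδ0.ne' hC0.ne']
    rw [Real.log_div hC0.ne' hδ0.ne'] at hlogle
    linarith
  obtain ⟨T, hTcard, hTtop, hTbot⟩ := exists_top_finset p k hk hkn'
  set badPairs : Finset (V × V) := (T ×ˢ Tᶜ).filter (fun q => ε ≤ p q.1 - p q.2)
    with hbaddef
  set B : V × V → Set Ω := fun q => {ω | ∑ i, (X i ω q.1 - X i ω q.2) ≤ 0} with hBdef
  have hBmeas : ∀ q, MeasurableSet (B q) := by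
    intro q
    apply measurableSet_le _ measurable_const
    apply Finset.measurable_sum
    intro i _
    exact ((measurable_pi_apply q.1).comp (hmeas i)).sub
      ((measurable_pi_apply q.2).comp (hmeas i))
  have hXint : ∀ (i : Fin t) (v : V), Integrable (fun ω => X i ω v) ℙ := by
    intro i v
    refine Integrable.mono' (integrable_const 1)
      ((measurable_pi_apply v).comp (hmeas i)).aestronglyMeasurable ?_
    filter_upwards [hrange i] with ω hω
    rw [Real.norm_eq_abs, abs_le]
    exact ⟨by linarith [(hω v).1], (hω v).2⟩
  -- the per-pair Chernoff bound
  have hpair : ∀ q ∈ badPairs, ℙ (B q) ≤ ENNReal.ofReal (δ / C) := by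
    intro q hq
    rw [hbaddef, Finset.mem_filter] at hq
    have hεq : ε ≤ p q.1 - p q.2 := hq.2
    have hμpos : (0:ℝ) < p q.1 - p q.2 := lt_of_lt_of_le hε0 hεq
    have hch := chernoff_sum (P := ℙ) (Y := fun i ω => X i ω q.1 - X i ω q.2)
      (fun i => ((measurable_pi_apply q.1).comp (hmeas i)).sub
        ((measurable_pi_apply q.2).comp (hmeas i)))
      (hindep.comp (fun _ (g : V → ℝ) => g q.1 - g q.2)
        (fun _ => (measurable_pi_apply _).sub (measurable_pi_apply _)))
      (fun i => by
        filter_upwards [hrange i] with ω hω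
        have h1 := (hω q.1).1; have h2 := (hω q.1).2
        have h3 := (hω q.2).1; have h4 := (hω q.2).2
        constructor <;> simp <;> linarith)
      hμpos
      (fun i => by
        rw [integral_sub (hXint i q.1) (hXint i q.2), hmean i q.1, hmean i q.2])
    rw [ENNReal.le_ofReal_iff_toReal_le (measure_ne_top _ _) (by positivity)]
    refine le_trans hch (le_trans ?_ hexp)
    apply Real.exp_le_exp.2
    have hsq : ε^2 ≤ (p q.1 - p q.2)^2 := pow_le_pow_left₀ hε0.le hεq 2
    nlinarith [ht0.le]
  set G : Set Ω := ⋂ q ∈ badPairs, (B q)ᶜ with hGdef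
  have hGmeas : MeasurableSet G := by
    apply MeasurableSet.iInter
    intro q
    apply MeasurableSet.iInter
    intro _
    exact (hBmeas q).compl
  -- union bound
  have hGc : ℙ Gᶜ ≤ ENNReal.ofReal δ := by
    have hGceq : Gᶜ = ⋃ q ∈ badPairs, B q := by
      rw [hGdef, Set.compl_iInter₂]
      simp only [compl_compl]
    rw [hGceq]
    refine le_trans (measure_biUnion_finset_le badPairs B) ?_
    have hcardbound : badPairs.card ≤ k * (n - k) := by
      refine le_trans (Finset.card_filter_le _ _) ?_
      rw [Finset.card_product, hTcard, Finset.card_compl, hTcard, hn]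
    calc ∑ q ∈ badPairs, ℙ (B q) ≤ ∑ _q ∈ badPairs, ENNReal.ofReal (δ / C) :=
          Finset.sum_le_sum hpair
      _ = (badPairs.card : ENNReal) * ENNReal.ofReal (δ / C) := by
          rw [Finset.sum_const, nsmul_eq_mul]
      _ ≤ ((k * (n - k) : ℕ) : ENNReal) * ENNReal.ofReal (δ / C) := by
          gcongr
      _ = ENNReal.ofReal δ := by
          rw [← ENNReal.ofReal_natCast, ← ENNReal.ofReal_mul (by positivity)]
          congr 1
          have hCnat : ((k * (n - k) : ℕ) : ℝ) = C := by
            rw [hCdef]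
            push_cast [Nat.cast_sub hkn.le]
            ring
          rw [hCnat, mul_comm, div_mul_cancel₀ _ hC0.ne']
  -- probability of the good event
  have h1 : (ℙ Gᶜ).toReal ≤ δ := ENNReal.toReal_le_of_le_ofReal hδ0.le hGc
  have hadd : (ℙ G).toReal + (ℙ Gᶜ).toReal = 1 := by
    have := measure_add_measure_compl (μ := (ℙ : Measure Ω)) hGmeas
    have h2 := congrArg ENNReal.toReal this
    rwa [ENNReal.toReal_add (measure_ne_top _ _) (measure_ne_top _ _), measure_univ,
      ENNReal.toReal_one] at h2
  have hGlb : 1 - δ ≤ (ℙ G).toReal := by linarith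
  -- inclusion of the good event in the target event
  have hsub : G ⊆ {ω | ∀ R : Finset V, R.card = k →
      (∀ u ∈ R, ∀ w ∉ R,
        (∑ i, X i ω w) / (t : ℝ) ≤ (∑ i, X i ω u) / (t : ℝ)) →
      (∀ v ∈ R, kthLargest p k - ε ≤ p v) ∧
      (∀ v ∉ R, p v < kthLargest p k + ε)} := by
    intro ω hω
    rw [hGdef, Set.mem_iInter₂] at hω
    have hgood : ∀ q ∈ badPairs, ∑ i, X i ω q.2 < ∑ i, X i ω q.1 := by
      intro q hq
      have := hω q hq
      rw [Set.mem_compl_iff, hBdef] at this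
      simp only [Set.mem_setOf_eq, not_le, Finset.sum_sub_distrib] at this
      linarith
    have hdiv : ∀ a b : ℝ, a / (t:ℝ) ≤ b / (t:ℝ) → a ≤ b := by
      intro a b hab
      have := mul_le_mul_of_nonneg_right hab ht0.le
      rwa [div_mul_cancel₀ _ ht0.ne', div_mul_cancel₀ _ ht0.ne'] at this
    intro R hRcard hRprop
    constructor
    · intro v hv
      by_contra hcon
      push_neg at hcon
      have hvT : v ∉ T := fun hvT => by have := hTtop v hvT; linarith
      have hTR : ¬ (T ⊆ R) := by
        intro hsub'
        have := Finset.eq_of_subset_of_card_le hsub' (by rw [hRcard, hTcard])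
        exact hvT (this ▸ hv)
      obtain ⟨u, huT, huR⟩ := Finset.not_subset.1 hTR
      have hq : (u, v) ∈ badPairs := by
        rw [hbaddef, Finset.mem_filter, Finset.mem_product, Finset.mem_compl]
        refine ⟨⟨huT, hvT⟩, ?_⟩
        have := hTtop u huT
        simp only
        linarith
      have h3 := hgood _ hq
      have h4 := hdiv _ _ (hRprop v hv u huR)
      simp only at h3
      linarith
    · intro v hv
      by_contra hcon
      push_neg at hcon
      have hvT : v ∈ T := by
        by_contra hvT
        have := hTbot v hvT
        linarith
      have hRT : ¬ (R ⊆ T) := by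
        intro hsub'
        have := Finset.eq_of_subset_of_card_le hsub' (by rw [hRcard, hTcard])
        exact hv (this ▸ hvT)
      obtain ⟨w, hwR, hwT⟩ := Finset.not_subset.1 hRT
      have hq : (v, w) ∈ badPairs := by
        rw [hbaddef, Finset.mem_filter, Finset.mem_product, Finset.mem_compl]
        refine ⟨⟨hvT, hwT⟩, ?_⟩
        have := hTbot w hwT
        simp only
        linarith
      have h3 := hgood _ hq
      have h4 := hdiv _ _ (hRprop w hwR v hv)
      simp only at h3
      linarith
  exact le_trans hGlb (ENNReal.toReal_mono (measure_ne_top _ _) (measure_mono hsub))
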